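/- For 0 < β ≤ 1 and n ≥ 1, the integral over the simplex S(n) of ∏_{k=1}^n (s_k - s_{k-1})^{β-1} (with s_0 = 0) equals Γ(β)^n / Γ(1 + nβ). -/

import Mathlib

open MeasureTheory Real Filter
open scoped ENNReal NNReal

def sPrev {n : ℕ} (s : Fin n → ℝ) (k : Fin n) : ℝ :=
  if (k : ℕ) = 0 then 0 else s ⟨(k : ℕ) - 1, lt_of_le_of_lt (Nat.sub_le _ _) k.isLt⟩

/-- The open simplex `{0 < s 0 < s 1 < ... < s (n-1) < 1}`. -/
def simplexSet (n : ℕ) : Set (Fin n → ℝ) :=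
  {s | (∀ k, sPrev s k < s k) ∧ ∀ k, s k < 1}

/-- The singular weight `R_α(s) = ∏ (s_k - s_{k-1})^{-α_k}`. -/
noncomputable def polyR {n : ℕ} (α : Fin n → ℝ) (s : Fin n → ℝ) : ℝ :=
  ∏ k, (s k - sPrev s k) ^ (-(α k))

/-- The normalizing constant `K_n(α)`. -/
noncomputable def polyK (n : ℕ) (α : Fin n → ℝ) : ℝ :=
  (∏ k, Real.Gamma (1 - α k)) / Real.Gamma (1 + ∑ k, (1 - α k))

/-! ### Auxiliary measurability lemmas -/

lemma measurable_sPrev {n : ℕ} (k : Fin n) : Measurable fun s : Fin n → ℝ => sPrev s k := by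
  unfold sPrev
  by_cases h : (k : ℕ) = 0 <;> simp only [h, if_true, if_false]
  · exact measurable_const
  · exact measurable_pi_apply _

lemma measurableSet_simplexSet (n : ℕ) : MeasurableSet (simplexSet n) := by
  have h : simplexSet n
      = (⋂ k, {s : Fin n → ℝ | sPrev s k < s k}) ∩ ⋂ k, {s : Fin n → ℝ | s k < 1} := by
    ext s; simp [simplexSet]
  rw [h]
  exact (MeasurableSet.iInter fun k =>
      measurableSet_lt (measurable_sPrev k) (measurable_pi_apply k)).inter
    (MeasurableSet.iInter fun k => measurableSet_lt (measurable_pi_apply k) measurable_const)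

lemma measurable_prodf {n : ℕ} (β : ℝ) :
    Measurable fun s : Fin n → ℝ => ∏ k, ENNReal.ofReal ((s k - sPrev s k) ^ (β - 1)) :=
  Finset.measurable_prod _ fun k _ =>
    (((measurable_pi_apply k).sub (measurable_sPrev k)).pow_const (β - 1)).ennreal_ofReal

/-! ### Pointwise lemmas about `Fin.cons` and the simplex -/

lemma sPrev_zero {n : ℕ} (s : Fin (n+1) → ℝ) : sPrev s 0 = 0 := by simp [sPrev]

lemma cons_mk_zero {n : ℕ} (t : ℝ) (w : Fin n → ℝ) (h : 0 < n+1) :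
    (Fin.cons t w : Fin (n+1) → ℝ) ⟨0, h⟩ = t := by
  rw [show (⟨0, h⟩ : Fin (n+1)) = 0 from rfl]
  exact Fin.cons_zero (α := fun _ => ℝ) t w

lemma cons_mk_succ {n : ℕ} (t : ℝ) (w : Fin n → ℝ) (m : ℕ) (h : m+1 < n+1) :
    (Fin.cons t w : Fin (n+1) → ℝ) ⟨m+1, h⟩ = w ⟨m, Nat.lt_of_succ_lt_succ h⟩ := by
  rw [show (⟨m+1, h⟩ : Fin (n+1)) = Fin.succ ⟨m, Nat.lt_of_succ_lt_succ h⟩ from rfl]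
  exact Fin.cons_succ (α := fun _ => ℝ) t w _

lemma cons_incr_succ {n : ℕ} (t : ℝ) (v : Fin n → ℝ) (k : Fin n) :
    (Fin.cons t (fun j => t + (1-t) * v j) : Fin (n+1) → ℝ) k.succ
      - sPrev (Fin.cons t (fun j => t + (1-t) * v j)) k.succ
    = (1-t) * (v k - sPrev v k) := by
  set w : Fin n → ℝ := fun j => t + (1-t) * v j with hw
  rw [Fin.cons_succ]
  unfold sPrev
  obtain ⟨kv, hkv⟩ := k
  simp only [Fin.val_succ, Nat.succ_ne_zero, if_false, Nat.add_sub_cancel]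
  match kv with
  | 0 =>
    simp only [if_true, cons_mk_zero, hw]
    ring
  | m + 1 =>
    simp only [Nat.succ_ne_zero, if_false, Nat.add_sub_cancel, cons_mk_succ, hw]
    ring

lemma cons_mem_simplex_iff {n : ℕ} {t : ℝ} (ht : t ∈ Set.Ioo (0:ℝ) 1) (v : Fin n → ℝ) :
    (Fin.cons t (fun j => t + (1-t) * v j) : Fin (n+1) → ℝ) ∈ simplexSet (n+1)
      ↔ v ∈ simplexSet n := by
  obtain ⟨ht0, ht1⟩ := ht
  have hc : (0:ℝ) < 1 - t := by linarith
  simp only [simplexSet, Set.mem_setOf_eq]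
  constructor
  · rintro ⟨h1, h2⟩
    refine ⟨fun k => ?_, fun k => ?_⟩
    · have hd : 0 < (1-t) * (v k - sPrev v k) := by
        rw [← cons_incr_succ]
        exact sub_pos.2 (h1 k.succ)
      nlinarith
    · have := h2 k.succ
      rw [Fin.cons_succ] at this
      nlinarith
  · rintro ⟨h1, h2⟩
    refine ⟨fun k => ?_, fun k => ?_⟩
    · induction k using Fin.cases with
      | zero =>
        rw [sPrev_zero, Fin.cons_zero]
        exact ht0
      | succ j =>
        have : 0 < (1-t) * (v j - sPrev v j) := mul_pos hc (sub_pos.2 (h1 j))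
        rw [← cons_incr_succ] at this
        linarith [this]
    · induction k using Fin.cases with
      | zero => rw [Fin.cons_zero]; exact ht1
      | succ j =>
        rw [Fin.cons_succ]
        nlinarith [h2 j]

lemma cons_not_mem {n : ℕ} {t : ℝ} (ht : t ∉ Set.Ioo (0:ℝ) 1) (r : Fin n → ℝ) :
    (Fin.cons t r : Fin (n+1) → ℝ) ∉ simplexSet (n+1) := by
  rintro ⟨h1, h2⟩
  have ha := h1 0
  have hb := h2 0
  rw [sPrev_zero, Fin.cons_zero] at ha
  rw [Fin.cons_zero] at hb
  exact ht ⟨ha, hb⟩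

lemma prod_cons_split {n : ℕ} (β t : ℝ) (v : Fin n → ℝ) :
    (∏ k : Fin (n+1), ENNReal.ofReal
        (((Fin.cons t (fun j => t + (1-t) * v j) : Fin (n+1) → ℝ) k
          - sPrev (Fin.cons t (fun j => t + (1-t) * v j)) k) ^ (β-1)))
    = ENNReal.ofReal (t ^ (β-1)) *
        ∏ k : Fin n, ENNReal.ofReal (((1-t) * (v k - sPrev v k)) ^ (β-1)) := by
  rw [Fin.prod_univ_succ]
  congr 1
  · rw [sPrev_zero, Fin.cons_zero, sub_zero]
  · exact Finset.prod_congr rfl fun k _ => by rw [cons_incr_succ]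

/-! ### The Beta integral -/

lemma real_beta {a b : ℝ} (ha : 0 < a) (hb : 0 < b) :
    ∫ x in (0:ℝ)..1, x ^ (a-1) * (1-x) ^ (b-1)
      = Real.Gamma a * Real.Gamma b / Real.Gamma (a+b) := by
  have h := Complex.Gamma_mul_Gamma_eq_betaIntegral (s := (a:ℂ)) (t := (b:ℂ))
    (by simpa using ha) (by simpa using hb)
  have h2 : Complex.betaIntegral a b
      = ((∫ x in (0:ℝ)..1, x ^ (a-1) * (1-x) ^ (b-1) : ℝ) : ℂ) := by
    rw [Complex.betaIntegral, ← intervalIntegral.integral_ofReal]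
    apply intervalIntegral.integral_congr
    intro x hx
    rw [Set.uIcc_of_le zero_le_one] at hx
    obtain ⟨hx0, hx1⟩ := hx
    show _ = ((_ : ℝ) : ℂ)
    rw [Complex.ofReal_mul, Complex.ofReal_cpow hx0,
      Complex.ofReal_cpow (by linarith : (0:ℝ) ≤ 1 - x)]
    push_cast
    ring
  rw [h2] at h
  have h3 : ((Real.Gamma a * Real.Gamma b : ℝ) : ℂ)
      = ((Real.Gamma (a+b) * ∫ x in (0:ℝ)..1, x ^ (a-1) * (1-x) ^ (b-1) : ℝ) : ℂ) := by
    rw [Complex.ofReal_mul, Complex.ofReal_mul, ← Complex.Gamma_ofReal, ← Complex.Gamma_ofReal,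
      ← Complex.Gamma_ofReal]
    push_cast
    exact h
  have h4 := Complex.ofReal_inj.1 h3
  have h5 : Real.Gamma (a+b) ≠ 0 := (Real.Gamma_pos_of_pos (by linarith)).ne'
  field_simp
  linarith [h4]

lemma beta_lintegral {a : ℝ} (p : ℝ) (ha : 0 < a) (hp : 0 ≤ p) :
    ∫⁻ t in Set.Ioo (0:ℝ) 1, ENNReal.ofReal (t ^ (a-1) * (1-t) ^ p)
      = ENNReal.ofReal (Real.Gamma a * Real.Gamma (p+1) / Real.Gamma (a + (p+1))) := by
  have hcont : Continuous fun x : ℝ => (1-x) ^ p := by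
    have : Continuous fun y : ℝ => y ^ p :=
      continuous_iff_continuousAt.2 fun x => Real.continuousAt_rpow_const x p (Or.inr hp)
    exact this.comp (continuous_const.sub continuous_id)
  have hii : IntervalIntegrable (fun x : ℝ => x ^ (a-1) * (1-x) ^ p) volume 0 1 :=
    (intervalIntegral.intervalIntegrable_rpow' (by linarith)).mul_continuousOn
      hcont.continuousOn
  have hint : IntegrableOn (fun x : ℝ => x ^ (a-1) * (1-x) ^ p) (Set.Ioo 0 1) volume :=
    hii.1.mono_set Set.Ioo_subset_Ioc_self
  have hnn : 0 ≤ᵐ[volume.restrict (Set.Ioo (0:ℝ) 1)] fun x : ℝ => x ^ (a-1) * (1-x) ^ p := by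
    filter_upwards [ae_restrict_mem measurableSet_Ioo] with x hx
    exact mul_nonneg (Real.rpow_nonneg hx.1.le _) (Real.rpow_nonneg (by linarith [hx.2]) _)
  rw [← ofReal_integral_eq_lintegral_ofReal hint hnn]
  congr 1
  rw [← integral_Ioc_eq_integral_Ioo, ← intervalIntegral.integral_of_le zero_le_one]
  have := real_beta ha (show (0:ℝ) < p + 1 by linarith)
  rw [← this]
  apply intervalIntegral.integral_congr
  intro x _
  norm_num

/-! ### Scaling -/

lemma lintegral_comp_smul_pi {n : ℕ} (g : (Fin n → ℝ) → ℝ≥0∞) (hg : Measurable g)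
    {c : ℝ} (hc : 0 < c) :
    ∫⁻ x, g x = ENNReal.ofReal (c ^ n) * ∫⁻ v, g (c • v) := by
  have h1 : ∫⁻ v, g (c • v) = ∫⁻ x, g x ∂(Measure.map (c • ·) volume) :=
    (lintegral_map hg (measurable_const_smul c)).symm
  rw [h1, Measure.map_addHaar_smul volume hc.ne', lintegral_smul_measure]
  have hfr : Module.finrank ℝ (Fin n → ℝ) = n := Module.finrank_fin_fun ℝ
  rw [hfr, abs_of_nonneg (by positivity), smul_eq_mul, ← mul_assoc,
    ← ENNReal.ofReal_mul (by positivity), mul_inv_cancel₀ (by positivity), ENNReal.ofReal_one,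
    one_mul]

/-! ### The main induction -/

noncomputable def Glin (β : ℝ) (n : ℕ) : ℝ≥0∞ :=
  ∫⁻ s in simplexSet n, ∏ k, ENNReal.ofReal ((s k - sPrev s k) ^ (β-1))

lemma Glin_zero (β : ℝ) : Glin β 0 = 1 := by
  have h : simplexSet 0 = Set.univ := by
    ext s; simp [simplexSet]
  rw [Glin, h, Measure.restrict_univ]
  have hv : (volume : Measure (Fin 0 → ℝ)) Set.univ = 1 := by
    rw [volume_pi, Measure.pi_univ]
    simp
  simp [hv]

lemma Glin_succ (β : ℝ) (n : ℕ) :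
    Glin β (n+1)
      = (∫⁻ t in Set.Ioo (0:ℝ) 1, ENNReal.ofReal (t ^ (β-1) * (1-t) ^ ((n:ℝ)*β)))
        * Glin β n := by
  classical
  set f : (Fin (n+1) → ℝ) → ℝ≥0∞ :=
    fun s => ∏ k, ENNReal.ofReal ((s k - sPrev s k) ^ (β-1)) with hf
  set F : (Fin (n+1) → ℝ) → ℝ≥0∞ := (simplexSet (n+1)).indicator f with hF
  have hfm : Measurable f := measurable_prodf β
  have hFm : Measurable F := hfm.indicator (measurableSet_simplexSet _)
  have hconsm : Measurable fun p : ℝ × (Fin n → ℝ) => (Fin.cons p.1 p.2 : Fin (n+1) → ℝ) := by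
    refine measurable_pi_iff.2 fun k => ?_
    induction k using Fin.cases with
    | zero => simpa using measurable_fst
    | succ j => simpa [Function.comp_def] using (measurable_pi_apply j).comp measurable_snd
  set g : ℝ × (Fin n → ℝ) → ℝ≥0∞ := fun p => F (Fin.cons p.1 p.2) with hg
  have hgm : Measurable g := hFm.comp hconsm
  have step1 : Glin β (n+1) = ∫⁻ p : ℝ × (Fin n → ℝ), g p := by
    rw [Glin, ← lintegral_indicator (measurableSet_simplexSet _) _]
    rw [← (volume_preserving_piFinSuccAbove (fun _ : Fin (n+1) => ℝ) 0).lintegral_comp hgm]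
    apply lintegral_congr
    intro s
    show F s = g _
    rw [hg]
    congr 1
    simp only [MeasurableEquiv.piFinSuccAbove_apply, Fin.insertNthEquiv,
      Equiv.coe_fn_symm_mk]
    rw [Fin.removeNth_zero]
    exact (Fin.cons_self_tail s).symm
  have inner : ∀ t : ℝ, (∫⁻ r : Fin n → ℝ, g (t, r))
      = Set.indicator (Set.Ioo (0:ℝ) 1)
          (fun t => ENNReal.ofReal (t ^ (β-1) * (1-t) ^ ((n:ℝ)*β)) * Glin β n) t := by
    intro t
    by_cases ht : t ∈ Set.Ioo (0:ℝ) 1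
    · obtain ⟨ht0, ht1⟩ := ht
      have hc : (0:ℝ) < 1 - t := by linarith
      rw [Set.indicator_of_mem (Set.mem_Ioo.mpr ⟨ht0, ht1⟩)]
      set K : (Fin n → ℝ) → ℝ≥0∞ := fun r => g (t, r) with hK
      have hKm : Measurable K := hgm.comp measurable_prodMk_left
      set K2 : (Fin n → ℝ) → ℝ≥0∞ := fun r => K ((fun _ => t) + r) with hK2
      have hK2m : Measurable K2 := hKm.comp (measurable_id.const_add _)
      have htr : ∫⁻ r, K r = ∫⁻ r, K2 r := (lintegral_add_left_eq_self K _).symm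
      have hsc : ∫⁻ r, K2 r = ENNReal.ofReal ((1-t) ^ n) * ∫⁻ v, K2 ((1-t) • v) :=
        lintegral_comp_smul_pi K2 hK2m hc
      have hpt : ∀ v : Fin n → ℝ, K2 ((1-t) • v)
          = Set.indicator (simplexSet n)
              (fun v => ENNReal.ofReal (t ^ (β-1)) * ENNReal.ofReal ((1-t) ^ (β-1)) ^ n *
                ∏ k, ENNReal.ofReal ((v k - sPrev v k) ^ (β-1))) v := by
        intro v
        have hco : ((fun _ => t) + (1-t) • v) = fun j => t + (1-t) * v j := rfl
        have hKv : K2 ((1-t) • v) = F (Fin.cons t (fun j => t + (1-t) * v j)) := by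
          rw [hK2, hK, hg]
          congr 1
        rw [hKv]
        by_cases hv : v ∈ simplexSet n
        · rw [Set.indicator_of_mem hv, hF,
            Set.indicator_of_mem ((cons_mem_simplex_iff (Set.mem_Ioo.mpr ⟨ht0, ht1⟩) v).2 hv), hf]
          beta_reduce
          rw [prod_cons_split]
          have heach : ∀ k : Fin n, ENNReal.ofReal (((1-t) * (v k - sPrev v k)) ^ (β-1))
              = ENNReal.ofReal ((1-t) ^ (β-1)) * ENNReal.ofReal ((v k - sPrev v k) ^ (β-1)) := by
            intro k
            rw [Real.mul_rpow hc.le (sub_pos.2 (hv.1 k)).le,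
              ENNReal.ofReal_mul (Real.rpow_nonneg hc.le _)]
          rw [Finset.prod_congr rfl fun k _ => heach k, Finset.prod_mul_distrib,
            Finset.prod_const, Finset.card_univ, Fintype.card_fin, mul_assoc]
        · rw [Set.indicator_of_notMem hv, hF,
            Set.indicator_of_notMem (fun hmem => hv ((cons_mem_simplex_iff (Set.mem_Ioo.mpr ⟨ht0, ht1⟩) v).1 hmem))]
      calc ∫⁻ r, K r = ENNReal.ofReal ((1-t) ^ n) * ∫⁻ v, K2 ((1-t) • v) := by
            rw [htr, hsc]
        _ = ENNReal.ofReal ((1-t) ^ n) *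
              (ENNReal.ofReal (t ^ (β-1)) * ENNReal.ofReal ((1-t) ^ (β-1)) ^ n * Glin β n) := by
            congr 1
            rw [lintegral_congr hpt, lintegral_indicator (measurableSet_simplexSet n) _,
              lintegral_const_mul _ (measurable_prodf β)]
            rfl
        _ = ENNReal.ofReal (t ^ (β-1) * (1-t) ^ ((n:ℝ)*β)) * Glin β n := by
            rw [← mul_assoc, ← mul_assoc]
            congr 2
            rw [← ENNReal.ofReal_pow (Real.rpow_nonneg hc.le _),
              ← ENNReal.ofReal_mul (by positivity), ← ENNReal.ofReal_mul (by positivity)]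
            congr 1
            rw [← Real.rpow_natCast ((1-t) ^ (β-1)) n, ← Real.rpow_mul hc.le,
              ← Real.rpow_natCast (1-t) n]
            rw [mul_comm ((1-t) ^ ((n:ℝ))) (t ^ (β-1)), mul_assoc,
              ← Real.rpow_add hc]
            ring_nf
        _ = _ := rfl
    · rw [Set.indicator_of_notMem ht]
      have hz : ∀ r : Fin n → ℝ, g (t, r) = 0 := by
        intro r
        exact Set.indicator_of_notMem (cons_not_mem ht r) f
      simp [hz]
  rw [step1, Measure.volume_eq_prod, lintegral_prod _ hgm.aemeasurable]
  rw [lintegral_congr inner]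
  rw [lintegral_indicator measurableSet_Ioo _]
  exact lintegral_mul_const _ (by
    exact ((Measurable.pow_const (measurable_id) _).mul
      ((measurable_const.sub measurable_id).pow_const _)).ennreal_ofReal)

lemma Glin_eq (β : ℝ) (hβ0 : 0 < β) (n : ℕ) :
    Glin β n = ENNReal.ofReal (Real.Gamma β ^ n / Real.Gamma (1 + n * β)) := by
  induction n with
  | zero =>
    rw [Glin_zero]
    norm_num [Real.Gamma_one]
  | succ n ih =>
    rw [Glin_succ β n, ih, beta_lintegral ((n:ℝ)*β) hβ0 (by positivity),
      ← ENNReal.ofReal_mul (by positivity)]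
    congr 1
    have hg1 : 0 < Real.Gamma (1 + (n:ℝ) * β) := Real.Gamma_pos_of_pos (by positivity)
    have hg2 : 0 < Real.Gamma (β + ((n:ℝ) * β + 1)) := Real.Gamma_pos_of_pos (by positivity)
    have e1 : Real.Gamma ((n:ℝ) * β + 1) = Real.Gamma (1 + (n:ℝ) * β) := by ring_nf
    have e2 : Real.Gamma (β + ((n:ℝ) * β + 1)) = Real.Gamma (1 + ((n:ℕ)+1 : ℝ) * β) := by
      ring_nf
    rw [e1]
    push_cast
    rw [← e2]
    field_simp
    ring

theorem simplex_beta_integral (n : ℕ) (hn : 1 ≤ n) (β : ℝ) (hβ0 : 0 < β) (hβ1 : β ≤ 1) :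
    ∫ s in simplexSet n, ∏ k, (s k - sPrev s k) ^ (β - 1) =
      Real.Gamma β ^ n / Real.Gamma (1 + n * β) := by
  have hms := measurableSet_simplexSet n
  have hnn : 0 ≤ᵐ[volume.restrict (simplexSet n)]
      fun s : Fin n → ℝ => ∏ k, (s k - sPrev s k) ^ (β - 1) := by
    filter_upwards [ae_restrict_mem hms] with s hs
    exact Finset.prod_nonneg fun k _ => Real.rpow_nonneg (sub_pos.2 (hs.1 k)).le _
  have hmeas : AEStronglyMeasurable (fun s : Fin n → ℝ => ∏ k, (s k - sPrev s k) ^ (β - 1))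
      (volume.restrict (simplexSet n)) :=
    (Finset.measurable_prod Finset.univ fun k _ =>
      ((measurable_pi_apply k).sub (measurable_sPrev k)).pow_const (β - 1)).aestronglyMeasurable
  rw [integral_eq_lintegral_of_nonneg_ae hnn hmeas]
  have hlin : ∫⁻ s in simplexSet n, ENNReal.ofReal (∏ k, (s k - sPrev s k) ^ (β - 1))
      = Glin β n := by
    apply setLIntegral_congr_fun hms
    intro s hs
    exact ENNReal.ofReal_prod_of_nonneg fun k _ =>
      Real.rpow_nonneg (sub_pos.2 (hs.1 k)).le _
  rw [hlin, Glin_eq β hβ0 n, ENNReal.toReal_ofReal]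
  exact div_nonneg (pow_nonneg (Real.Gamma_pos_of_pos hβ0).le _)
    (Real.Gamma_pos_of_pos (by positivity)).le
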